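/- Let S be a numerical semigroup and z a nonzero element of S. Then z is an Arf element of S if and only if for all x, y in the Apéry set Ap(S,z) with x > z and y > z, the sum x + y is not in Ap(S,z). -/
import Mathlib


/-- A numerical semigroup: an additive submonoid of ℕ with finite complement. -/
structure NumSgp where
  carrier : Set ℕ
  zero_mem : 0 ∈ carrier
  add_mem : ∀ ⦃a b : ℕ⦄, a ∈ carrier → b ∈ carrier → a + b ∈ carrier
  cofinite : carrierᶜ.Finite

/-- The multiplicity: the smallest nonzero element. -/
noncomputable def NumSgp.mult (S : NumSgp) : ℕ := sInf {n | n ∈ S.carrier ∧ n ≠ 0}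

/-- The Apéry set of `S` with respect to `s`: elements `x ∈ S` with `x - s ∉ S`
(over the integers, i.e. there is no `y ∈ S` with `y + s = x`). -/
def NumSgp.Ap (S : NumSgp) (s : ℕ) : Set ℕ :=
  {x | x ∈ S.carrier ∧ ∀ y ∈ S.carrier, y + s ≠ x}

/-- `z` is an Arf element of `S`. -/
def NumSgp.ArfElem (S : NumSgp) (z : ℕ) : Prop :=
  ∀ x ∈ S.carrier, ∀ y ∈ S.carrier, z ≤ x → z ≤ y → x + y - z ∈ S.carrier

/-- The minimal generating set: nonzero elements not expressible as a sum of two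
nonzero elements of `S`. -/
def NumSgp.minGen (S : NumSgp) : Set ℕ :=
  {x | x ∈ S.carrier ∧ x ≠ 0 ∧ ∀ a ∈ S.carrier, ∀ b ∈ S.carrier, a ≠ 0 → b ≠ 0 → a + b ≠ x}

/-- The embedding dimension: the cardinality of the minimal generating set. -/
noncomputable def NumSgp.edim (S : NumSgp) : ℕ := S.minGen.ncard

/-- The Frobenius number: the largest gap. -/
noncomputable def NumSgp.frob (S : NumSgp) : ℕ := sSup S.carrierᶜ

/-- The conductor: the smallest `c` with `c + ℤ≥0 ⊆ S`. -/
noncomputable def NumSgp.cond (S : NumSgp) : ℕ := sInf {c | ∀ n, c ≤ n → n ∈ S.carrier}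

/-- The genus: the number of gaps. -/
noncomputable def NumSgp.genus (S : NumSgp) : ℕ := S.carrierᶜ.ncard

/-- The set of pseudo-Frobenius numbers. -/
def NumSgp.PF (S : NumSgp) : Set ℕ :=
  {x | x ∉ S.carrier ∧ ∀ s ∈ S.carrier, s ≠ 0 → x + s ∈ S.carrier}

/-- The type of `S`: the number of pseudo-Frobenius numbers. -/
noncomputable def NumSgp.type (S : NumSgp) : ℕ := S.PF.ncard

/-- `S` is a MED semigroup: its multiplicity is an Arf element, i.e. for all
`x, y ∈ S` with `x, y ≥ m(S)`, `x + y - m(S) ∈ S`. -/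
def NumSgp.IsMED (S : NumSgp) : Prop := S.ArfElem S.mult

/-- The MED closure of `S`: the intersection of all MED numerical semigroups
containing `S` with the same multiplicity. -/
def NumSgp.MEDclosure (S : NumSgp) : Set ℕ :=
  ⋂ T ∈ {T : NumSgp | S.carrier ⊆ T.carrier ∧ T.mult = S.mult ∧ T.IsMED}, T.carrier


lemma NumSgp.mul_mem (S : NumSgp) {z : ℕ} (hz : z ∈ S.carrier) : ∀ n, n * z ∈ S.carrier := by
  intro n
  induction n with
  | zero => simpa using S.zero_mem
  | succ k ih => rw [Nat.succ_mul]; exact S.add_mem ih hz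

lemma NumSgp.ap_decomp (S : NumSgp) {z : ℕ} (hz0 : z ≠ 0) :
    ∀ w ∈ S.carrier, ∃ a ∈ S.Ap z, ∃ k, w = a + k * z := by
  intro w
  induction w using Nat.strong_induction_on with
  | _ w ih =>
    intro hw
    by_cases h : w ∈ S.Ap z
    · exact ⟨w, h, 0, by ring⟩
    · simp only [NumSgp.Ap, Set.mem_setOf_eq, not_and, not_forall] at h
      obtain ⟨y, hy, hyz⟩ := h hw
      simp only [not_not] at hyz
      obtain ⟨a, ha, k, hk⟩ := ih y (by omega) hy
      exact ⟨a, ha, k + 1, by rw [Nat.succ_mul]; omega⟩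

theorem arf_iff_apery_sumfree (S : NumSgp) (z : ℕ) (hz : z ∈ S.carrier) (hz0 : z ≠ 0) :
    S.ArfElem z ↔ ∀ x ∈ S.Ap z, ∀ y ∈ S.Ap z, z < x → z < y → x + y ∉ S.Ap z := by
  constructor
  · intro hArf x hx y hy hxz hyz hmem
    have hs := hArf x hx.1 y hy.1 (le_of_lt hxz) (le_of_lt hyz)
    exact hmem.2 _ hs (by omega)
  · intro hsum x hx y hy hxz hyz
    obtain ⟨a, ha, k, hk⟩ := S.ap_decomp hz0 x hx
    obtain ⟨b, hb, l, hl⟩ := S.ap_decomp hz0 y hy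
    rcases Nat.eq_zero_or_pos k with hk0 | hk1
    · rcases Nat.eq_zero_or_pos l with hl0 | hl1
      · subst hk hl
        simp only [hk0, hl0, Nat.zero_mul, Nat.add_zero] at *
        have haz : z < a := by
          rcases lt_or_eq_of_le hxz with h | h
          · exact h
          · exact absurd (ha.2 0 S.zero_mem (by omega)) (by simp)
        have hbz : z < b := by
          rcases lt_or_eq_of_le hyz with h | h
          · exact h
          · exact absurd (hb.2 0 S.zero_mem (by omega)) (by simp)
        have hnap := hsum a ha b hb haz hbz
        simp only [NumSgp.Ap, Set.mem_setOf_eq, not_and, not_forall] at hnap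
        obtain ⟨w, hw, hwz⟩ := hnap (S.add_mem ha.1 hb.1)
        simp only [not_not] at hwz
        have : a + b - z = w := by omega
        rw [this]; exact hw
      · have : x + y - z = a + (k * z) + (b + (l - 1) * z) := by
          subst hk hl
          have : l * z = (l-1)*z + z := by
            have : l = (l - 1) + 1 := by omega
            nth_rewrite 1 [this]; ring
          omega
        rw [this]
        exact S.add_mem (S.add_mem ha.1 (S.mul_mem hz _)) (S.add_mem hb.1 (S.mul_mem hz _))
    · have : x + y - z = a + (k - 1) * z + y := by
        subst hk
        have : k * z = (k-1)*z + z := by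
          have : k = (k - 1) + 1 := by omega
          nth_rewrite 1 [this]; ring
        omega
      rw [this]
      exact S.add_mem (S.add_mem ha.1 (S.mul_mem hz _)) hy
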